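/- For every natural number H ≥ 2 and every real number M > 0, there exist a finite state type S, a finite nonempty action type A, a transition function T : S → A → S, a reward function r : S → A → ℝ, a score function u : S → A → ℝ, and an initial state s₀ : S, such that: (i) every u-greedy policy π : S → A has H-step return R_H(π, s₀) = 0; (ii) every one-step lookahead policy π_L : S → A has H-step return R_H(π_L, s₀) = M; and (iii) M is the maximum H-step return over all policies from s₀. Consequently, one-step lookahead strictly dominates step-wise greedy decision-making in worst-case performance, with a separation of size M that can be made arbitrarily large. -/

import Mathlib

/-- Trajectory of a policy `π` in a deterministic environment with transition `T`,
starting from `s₀`: `s_0 = s₀`, `s_{t+1} = T (s_t) (π (s_t))`. -/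
def traj {S A : Type*} (T : S → A → S) (π : S → A) (s₀ : S) : ℕ → S
  | 0 => s₀
  | t + 1 => T (traj T π s₀ t) (π (traj T π s₀ t))

/-- `H`-step return of policy `π` from `s₀`: `∑_{t=0}^{H-1} r (s_t) (π (s_t))`. -/
noncomputable def ret {S A : Type*} (T : S → A → S) (r : S → A → ℝ)
    (π : S → A) (s₀ : S) (H : ℕ) : ℝ :=
  ∑ t ∈ Finset.range H, r (traj T π s₀ t) (π (traj T π s₀ t))

/-- One-step lookahead value: `V₁(s, a) = r(s, a) + max_{a'} r(T(s, a), a')`. -/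
noncomputable def lookahead1 {S A : Type*} [Fintype A] [Nonempty A]
    (T : S → A → S) (r : S → A → ℝ) (s : S) (a : A) : ℝ :=
  r s a + Finset.univ.sup' Finset.univ_nonempty (fun a' => r (T s a) a')

/-- Three-state environment: start, good, sink. -/
inductive GSt : Type
  | start | good | sink
deriving DecidableEq

instance : Fintype GSt :=
  ⟨{GSt.start, GSt.good, GSt.sink}, fun x => by cases x <;> simp⟩

open GSt

/-- Transition function. -/
def gT : GSt → Bool → GSt
  | start, true => good
  | start, false => sink
  | good, _ => sink
  | sink, _ => sink

/-- Reward function: only `good`/`true` gives `M`. -/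
noncomputable def gr (M : ℝ) : GSt → Bool → ℝ
  | good, true => M
  | _, _ => 0

/-- Score function: prefers `false` at `start`. -/
def gu : GSt → Bool → ℝ
  | start, false => 1
  | _, _ => 0

lemma sup'_bool (f : Bool → ℝ) (h : f false ≤ f true) :
    Finset.univ.sup' Finset.univ_nonempty f = f true := by
  apply le_antisymm
  · exact Finset.sup'_le _ _ (by intro b _; cases b <;> simp [h])
  · exact Finset.le_sup' _ (Finset.mem_univ true)

lemma gT_sink (a : Bool) : gT sink a = sink := by cases a <;> rfl

lemma gr_start (M : ℝ) (a : Bool) : gr M start a = 0 := by cases a <;> rfl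
lemma gr_sink (M : ℝ) (a : Bool) : gr M sink a = 0 := by cases a <;> rfl
lemma gr_le (M : ℝ) (hM : 0 ≤ M) (s : GSt) (a : Bool) : gr M s a ≤ M := by
  cases s <;> cases a <;> simp [gr, hM]

/-- For any policy, from time 2 on the trajectory is in `sink`. -/
lemma traj_sink (π : GSt → Bool) (t : ℕ) (ht : 2 ≤ t) : traj gT π start t = sink := by
  induction t with
  | zero => omega
  | succ n ih =>
    rcases Nat.lt_or_ge n 2 with h | h
    · interval_cases n
      · omega
      · show gT (traj gT π start 1) _ = sink
        have h1 : traj gT π start 1 = good ∨ traj gT π start 1 = sink := by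
          show gT start (π start) = good ∨ gT start (π start) = sink
          cases h : π start <;> simp [gT]
        rcases h1 with h1 | h1 <;> rw [h1] <;>
          cases π _ <;> rfl
    · show gT (traj gT π start n) _ = sink
      rw [ih h]; exact gT_sink _

/-- **Even one-step lookahead strictly dominates step-wise greedy decision making.**
For every horizon `H ≥ 2` and every `M > 0`, there is a finite deterministic environment
with score function `u` and initial state `s₀` such that every `u`-greedy policy attains
`H`-step return `0`, every one-step lookahead policy attains return `M`, and `M` is the
maximum return over all policies; the separation `M` is arbitrarily large. -/
theorem one_step_lookahead_dominates_greedy :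
    ∀ H : ℕ, 2 ≤ H → ∀ M : ℝ, 0 < M →
    ∃ (S A : Type) (_ : Fintype S) (iA : Fintype A) (nA : Nonempty A)
      (T : S → A → S) (r : S → A → ℝ) (u : S → A → ℝ) (s₀ : S),
      (∀ π : S → A, (∀ s a, u s a ≤ u s (π s)) → ret T r π s₀ H = 0) ∧
      (∀ πL : S → A,
        (∀ s a, @lookahead1 S A iA nA T r s a ≤ @lookahead1 S A iA nA T r s (πL s)) →
        ret T r πL s₀ H = M) ∧
      (∀ π : S → A, ret T r π s₀ H ≤ M) := by
  intro H hH M hM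
  refine ⟨GSt, Bool, inferInstance, inferInstance, inferInstance,
    gT, gr M, gu, start, ?_, ?_, ?_⟩
  · -- greedy
    intro π hπ
    have hπ0 : π start = false := by
      by_contra h
      have h' : π start = true := by cases h' : π start <;> simp_all
      have := hπ start false
      rw [h'] at this
      norm_num [gu] at this
    apply Finset.sum_eq_zero
    intro t _
    rcases Nat.lt_or_ge t 2 with h | h
    · interval_cases t
      · exact gr_start M _
      · show gr M (gT start (π start)) _ = 0
        rw [hπ0]; exact gr_sink M _
    · rw [traj_sink π t h]; exact gr_sink M _
  · -- lookahead
    intro π hπ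
    -- compute lookahead values
    have hgood : Finset.univ.sup' Finset.univ_nonempty (fun a' => gr M good a') = M := by
      rw [sup'_bool (fun a' => gr M good a') (by simp [gr, hM.le])]; rfl
    have hsink : Finset.univ.sup' Finset.univ_nonempty (fun a' => gr M sink a') = 0 := by
      rw [sup'_bool (fun a' => gr M sink a') le_rfl]; rfl
    have hstart_t : lookahead1 gT (gr M) start true = M := by
      rw [lookahead1]; show gr M start true + _ = M; rw [gr_start]; show 0 + _ = M
      rw [show gT start true = good from rfl, hgood, zero_add]
    have hstart_f : lookahead1 gT (gr M) start false = 0 := by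
      rw [lookahead1]; show gr M start false + _ = 0; rw [gr_start]
      rw [show gT start false = sink from rfl, hsink, zero_add]
    have hgood_t : lookahead1 gT (gr M) good true = M := by
      rw [lookahead1]
      rw [show gT good true = sink from rfl, hsink]
      show gr M good true + 0 = M; rw [add_zero]; rfl
    have hgood_f : lookahead1 gT (gr M) good false = 0 := by
      rw [lookahead1]
      rw [show gT good false = sink from rfl, hsink]
      show gr M good false + 0 = 0; rw [add_zero]; rfl
    have hπ0 : π start = true := by
      by_contra h
      have h' : π start = false := by cases h' : π start <;> simp_all
      have := hπ start true
      rw [h', hstart_f, hstart_t] at this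
      linarith
    have hπ1 : π good = true := by
      by_contra h
      have h' : π good = false := by cases h' : π good <;> simp_all
      have := hπ good true
      rw [h', hgood_f, hgood_t] at this
      linarith
    have htraj1 : traj gT π start 1 = good := by
      show gT start (π start) = good
      rw [hπ0]; rfl
    rw [ret, Finset.sum_eq_single 1]
    · rw [htraj1, hπ1]; rfl
    · intro t _ ht
      rcases Nat.lt_or_ge t 2 with h | h
      · interval_cases t
        · exact gr_start M _
        · omega
      · rw [traj_sink π t h]; exact gr_sink M _
    · intro h; exact absurd (Finset.mem_range.mpr (by omega)) h
  · -- max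
    intro π
    rw [ret, Finset.sum_eq_single 1]
    · exact gr_le M hM.le _ _
    · intro t _ ht
      rcases Nat.lt_or_ge t 2 with h | h
      · interval_cases t
        · exact gr_start M _
        · omega
      · rw [traj_sink π t h]; exact gr_sink M _
    · intro h
      exact absurd (Finset.mem_range.mpr (by omega)) h
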